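/- Every b ∈ T can be written as a finite nonnegative rational combination of pure vectors: there exist N ∈ ℕ, nonnegative rationals c_1, …, c_N, and pairs of integers k_m < ℓ_m (for 1 ≤ m ≤ N) with each k_m and ℓ_m lying in the support of b, such that b = Σ_{m=1}^N c_m · e_{k_m,ℓ_m}. In particular, the cone T is contained in the cone generated by the pure vectors. -/

import Mathlib

/-- The pure vector `e_{k,ℓ} ∈ 𝔹`: the finitely supported function `ℤ → ℚ`
equal to `1` at `k` and at `ℓ` and `0` elsewhere (for `k < ℓ`). -/
noncomputable def pureVec (k ℓ : ℤ) : ℤ →₀ ℚ :=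
  Finsupp.single k 1 + Finsupp.single ℓ 1

/-- The linear functional `τ_j(b) = −b(j) + Σ_{i ≠ j} b(i) = (Σ_i b(i)) − 2 b(j)`. -/
def tau (b : ℤ →₀ ℚ) (j : ℤ) : ℚ :=
  (b.sum fun _ v => v) - 2 * b j

/-- Membership in the cone `T = {b : σ_j(b) ≥ 0 and τ_j(b) ≥ 0 for all j}`. -/
def memT (b : ℤ →₀ ℚ) : Prop :=
  ∀ j : ℤ, 0 ≤ b j ∧ 0 ≤ tau b j

/-- Auxiliary: a list-based decomposition certificate. -/
def goodList (b : ℤ →₀ ℚ) (L : List (ℚ × ℤ × ℤ)) : Prop :=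
  (∀ p ∈ L, 0 ≤ p.1 ∧ p.2.1 < p.2.2 ∧ p.2.1 ∈ b.support ∧ p.2.2 ∈ b.support) ∧
    b = (L.map fun p => p.1 • pureVec p.2.1 p.2.2).sum

lemma pureVec_apply (k ℓ x : ℤ) :
    pureVec k ℓ x = (if k = x then (1 : ℚ) else 0) + (if ℓ = x then 1 else 0) := by
  simp [pureVec, Finsupp.single_apply]

lemma pureVec_minmax {i j : ℤ} (h : i ≠ j) :
    pureVec (min i j) (max i j) = Finsupp.single i 1 + Finsupp.single j 1 := by
  rcases lt_or_gt_of_ne h with h | h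
  · rw [min_eq_left h.le, max_eq_right h.le]; rfl
  · rw [min_eq_right h.le, max_eq_left h.le]; exact add_comm _ _

lemma sum_eq_support_sum (b : ℤ →₀ ℚ) :
    (b.sum fun _ v => v) = ∑ i ∈ b.support, b i := rfl

/-- The tight case: if some `τ_j(b) = 0` with `j` in the support, `b` decomposes directly. -/
lemma tight_case (b : ℤ →₀ ℚ) (hb : memT b) (j : ℤ) (hj : j ∈ b.support)
    (ht : tau b j = 0) : ∃ L, goodList b L := by
  refine ⟨(b.support.erase j).toList.map fun i => (b i, min i j, max i j), ?_, ?_⟩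
  · intro p hp
    simp only [List.mem_map, Finset.mem_toList] at hp
    obtain ⟨i, hi, rfl⟩ := hp
    have hij : i ≠ j := Finset.ne_of_mem_erase hi
    have hi' : i ∈ b.support := Finset.mem_of_mem_erase hi
    refine ⟨(hb i).1, min_lt_max.mpr hij, ?_, ?_⟩
    · rcases le_total i j with h | h
      · simpa [min_eq_left h] using hi'
      · simpa [min_eq_right h] using hj
    · rcases le_total i j with h | h
      · simpa [max_eq_right h] using hj
      · simpa [max_eq_left h] using hi'
  · rw [List.map_map]
    have : ((b.support.erase j).toList.map
        ((fun p : ℚ × ℤ × ℤ => p.1 • pureVec p.2.1 p.2.2) ∘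
          fun i => (b i, min i j, max i j))).sum
        = ∑ i ∈ b.support.erase j, b i • pureVec (min i j) (max i j) :=
      Finset.sum_map_toList _ _
    rw [this]
    ext x
    rw [Finsupp.finset_sum_apply]
    have hcong : ∀ i ∈ b.support.erase j,
        (b i • pureVec (min i j) (max i j)) x
          = b i * ((if i = x then (1:ℚ) else 0) + (if j = x then 1 else 0)) := by
      intro i hi
      have hij : i ≠ j := Finset.ne_of_mem_erase hi
      rw [pureVec_minmax hij]
      simp [Finsupp.single_apply, mul_add]
    rw [Finset.sum_congr rfl hcong]
    have hS : ∑ i ∈ b.support.erase j, b i = (b.sum fun _ v => v) - b j := by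
      rw [sum_eq_support_sum]
      rw [← Finset.add_sum_erase _ _ hj]
      ring
    have hbj : b j = (b.sum fun _ v => v) - b j := by
      have : (b.sum fun _ v => v) - 2 * b j = 0 := ht
      linarith
    simp only [mul_add, Finset.sum_add_distrib, mul_ite, mul_one, mul_zero]
    rw [Finset.sum_ite_eq' (b.support.erase j) x b]
    by_cases hx : x = j
    · subst hx
      have hxe : x ∉ b.support.erase x := fun h => (Finset.ne_of_mem_erase h) rfl
      simp only [if_pos rfl, if_neg hxe, if_true]
      rw [hS]
      linarith
    · simp only [if_neg (fun h : j = x => hx h.symm), Finset.sum_const_zero, add_zero]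
      by_cases hxs : x ∈ b.support
      · rw [if_pos (Finset.mem_erase.mpr ⟨hx, hxs⟩)]
      · rw [if_neg (fun h => hxs (Finset.mem_of_mem_erase h))]
        exact Finsupp.notMem_support_iff.mp hxs

/-- Extending a decomposition by one pure vector. -/
lemma cons_good (b b' : ℤ →₀ ℚ) (c : ℚ) (k ℓ : ℤ) (hc : 0 ≤ c) (hkl : k < ℓ)
    (hk : k ∈ b.support) (hl : ℓ ∈ b.support) (hsub : b'.support ⊆ b.support)
    (heq : b = c • pureVec k ℓ + b') (L' : List (ℚ × ℤ × ℤ)) (h : goodList b' L') :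
    ∃ L, goodList b L := by
  refine ⟨(c, k, ℓ) :: L', ?_, ?_⟩
  · intro p hp
    rcases List.mem_cons.mp hp with rfl | hp
    · exact ⟨hc, hkl, hk, hl⟩
    · obtain ⟨h1, h2, h3, h4⟩ := h.1 p hp
      exact ⟨h1, h2, hsub h3, hsub h4⟩
  · rw [List.map_cons, List.sum_cons, ← h.2, heq]

lemma zero_of_support_empty (b : ℤ →₀ ℚ) (h : b.support = ∅) : b = 0 :=
  Finsupp.support_eq_empty.mp h

lemma main_aux : ∀ n : ℕ, ∀ b : ℤ →₀ ℚ, memT b → b.support.card ≤ n →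
    ∃ L, goodList b L := by
  intro n
  induction n with
  | zero =>
    intro b _ hcard
    have : b = 0 := Finsupp.support_eq_empty.mp (Finset.card_eq_zero.mp (Nat.le_zero.mp hcard))
    exact ⟨[], by simp, by simp [this]⟩
  | succ n ih =>
    intro b hb hcard
    by_cases hb0 : b = 0
    · exact ⟨[], by simp, by simp [hb0]⟩
    -- tight case?
    by_cases htight : ∃ j ∈ b.support, tau b j = 0
    · obtain ⟨j, hj, ht⟩ := htight
      exact tight_case b hb j hj ht
    push_neg at htight
    have htpos : ∀ j ∈ b.support, 0 < tau b j := fun j hj =>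
      lt_of_le_of_ne (hb j).2 (Ne.symm (htight j hj))
    have hne : b.support.Nonempty := Finsupp.support_nonempty_iff.mpr hb0
    set S := (b.sum fun _ v => v) with hSdef
    have hSsum : S = ∑ i ∈ b.support, b i := rfl
    -- pick k = min of support
    set k := b.support.min' hne with hkdef
    have hk : k ∈ b.support := b.support.min'_mem hne
    have hbk : 0 < b k := lt_of_le_of_ne (hb k).1 (Ne.symm (Finsupp.mem_support_iff.mp hk))
    -- support has a second element
    have hne2 : (b.support.erase k).Nonempty := by
      rw [Finset.nonempty_iff_ne_empty]
      intro h
      have hsub : b.support ⊆ {k} := by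
        intro x hx
        by_contra hxk
        have : x ∈ b.support.erase k :=
          Finset.mem_erase.mpr ⟨fun hh => hxk (hh ▸ Finset.mem_singleton_self k), hx⟩
        simp [h] at this
      have hSk : S = b k := by
        rw [hSsum, Finset.sum_subset hsub]
        · simp
        · intro x _ hx
          exact Finsupp.notMem_support_iff.mp hx
      have := htpos k hk
      rw [tau, ← hSdef, hSk] at this
      linarith
    set ℓ := (b.support.erase k).min' hne2 with hldef
    have hlmem : ℓ ∈ b.support.erase k := (b.support.erase k).min'_mem hne2
    have hl : ℓ ∈ b.support := Finset.mem_of_mem_erase hlmem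
    have hlk : ℓ ≠ k := Finset.ne_of_mem_erase hlmem
    have hkl : k < ℓ := lt_of_le_of_ne (b.support.min'_le ℓ hl) (Ne.symm hlk)
    have hbl : 0 < b ℓ := lt_of_le_of_ne (hb ℓ).1 (Ne.symm (Finsupp.mem_support_iff.mp hl))
    -- support has a third element
    have hne3 : (b.support \ {k, ℓ}).Nonempty := by
      rw [Finset.nonempty_iff_ne_empty]
      intro h
      have hsub : b.support ⊆ {k, ℓ} := by
        intro x hx
        by_contra hxkl
        have : x ∈ b.support \ {k, ℓ} := Finset.mem_sdiff.mpr ⟨hx, hxkl⟩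
        simp [h] at this
      have hSkl : S = b k + b ℓ := by
        rw [hSsum, Finset.sum_subset hsub]
        · rw [Finset.sum_pair hkl.ne]
        · intro x _ hx
          exact Finsupp.notMem_support_iff.mp hx
      have h1 := htpos k hk
      have h2 := htpos ℓ hl
      rw [tau, ← hSdef, hSkl] at h1 h2
      linarith
    set t := (b.support \ {k, ℓ}).inf' hne3 (fun j => tau b j / 2) with htdef
    have htp : 0 < t := by
      rw [htdef, Finset.lt_inf'_iff]
      intro i hi
      have := htpos i (Finset.mem_sdiff.mp hi).1
      linarith
    set c := min (min (b k) (b ℓ)) t with hcdef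
    have hcpos : 0 < c := lt_min (lt_min hbk hbl) htp
    have hck : c ≤ b k := le_trans (min_le_left _ _) (min_le_left _ _)
    have hcl : c ≤ b ℓ := le_trans (min_le_left _ _) (min_le_right _ _)
    have hct : c ≤ t := min_le_right _ _
    -- the residue
    set b' := b - c • pureVec k ℓ with hb'def
    have hb'apply : ∀ x, b' x = b x - c * ((if k = x then (1:ℚ) else 0) + (if ℓ = x then 1 else 0)) := by
      intro x
      rw [hb'def]
      simp [pureVec_apply]
    have hb'k : b' k = b k - c := by rw [hb'apply k, if_pos rfl, if_neg hlk]; ring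
    have hb'l : b' ℓ = b ℓ - c := by
      rw [hb'apply ℓ, if_neg (Ne.symm hlk), if_pos rfl]; ring
    have hb'other : ∀ x, x ≠ k → x ≠ ℓ → b' x = b x := by
      intro x h1 h2
      rw [hb'apply x, if_neg (Ne.symm h1), if_neg (Ne.symm h2)]; ring
    -- sum of b'
    have hsum' : (b'.sum fun _ v => v) = S - 2 * c := by
      have h1 : b' = b - (Finsupp.single k c + Finsupp.single ℓ c) := by
        rw [hb'def, pureVec, smul_add, Finsupp.smul_single', Finsupp.smul_single', mul_one]
      rw [h1, Finsupp.sum_sub_index (fun a b₁ b₂ => rfl),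
        Finsupp.sum_add_index (fun _ _ => rfl) (fun _ _ _ _ => rfl),
        Finsupp.sum_single_index rfl, Finsupp.sum_single_index rfl, ← hSdef]
      ring
    have htau' : ∀ j, tau b' j = S - 2 * c - 2 * b' j := by
      intro j; rw [tau, hsum']
    -- b' is in T
    have hb' : memT b' := by
      intro j
      constructor
      · by_cases h1 : j = k
        · rw [h1, hb'k]; linarith
        by_cases h2 : j = ℓ
        · rw [h2, hb'l]; linarith
        · rw [hb'other j h1 h2]; exact (hb j).1
      · rw [htau']
        by_cases h1 : j = k
        · rw [h1, hb'k]
          have := (hb k).2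
          rw [tau, ← hSdef] at this
          linarith
        by_cases h2 : j = ℓ
        · rw [h2, hb'l]
          have := (hb ℓ).2
          rw [tau, ← hSdef] at this
          linarith
        rw [hb'other j h1 h2]
        by_cases hjs : j ∈ b.support
        · have hj3 : j ∈ b.support \ {k, ℓ} := by
            refine Finset.mem_sdiff.mpr ⟨hjs, ?_⟩
            simp [h1, h2]
          have : t ≤ tau b j / 2 := Finset.inf'_le _ hj3
          have hτ : tau b j = S - 2 * b j := by rw [tau, ← hSdef]
          have hc2 : c ≤ tau b j / 2 := le_trans hct this
          rw [hτ] at hc2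
          linarith
        · have hj0 : b j = 0 := Finsupp.notMem_support_iff.mp hjs
          have := (hb k).2
          rw [tau, ← hSdef] at this
          rw [hj0]
          linarith
    -- support of b' inside support of b
    have hsub : b'.support ⊆ b.support := by
      intro x hx
      have hx' : b' x ≠ 0 := Finsupp.mem_support_iff.mp hx
      by_cases h1 : x = k
      · rw [h1]; exact hk
      by_cases h2 : x = ℓ
      · rw [h2]; exact hl
      · rw [hb'other x h1 h2] at hx'
        exact Finsupp.mem_support_iff.mpr hx'
    have heq : b = c • pureVec k ℓ + b' := by rw [hb'def]; abel
    -- split on whether c = t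
    rcases lt_or_eq_of_le hct with hlt | hceq
    · -- support strictly shrinks
      have hdrop : b' k = 0 ∨ b' ℓ = 0 := by
        have : c = min (b k) (b ℓ) := by
          rcases min_cases (min (b k) (b ℓ)) t with ⟨h, _⟩ | ⟨h, h'⟩
          · exact h
          · rw [hcdef] at hlt; rw [h] at hlt; exact absurd hlt (lt_irrefl t)
        rcases min_cases (b k) (b ℓ) with ⟨h, _⟩ | ⟨h, _⟩
        · left; rw [hb'k, this, h]; ring
        · right; rw [hb'l, this, h]; ring
      have hx : ∃ x, x ∈ b.support ∧ x ∉ b'.support := by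
        rcases hdrop with h | h
        · exact ⟨k, hk, fun hh => (Finsupp.mem_support_iff.mp hh) h⟩
        · exact ⟨ℓ, hl, fun hh => (Finsupp.mem_support_iff.mp hh) h⟩
      obtain ⟨x, hxb, hxb'⟩ := hx
      have hss : b'.support ⊂ b.support := ⟨hsub, fun h => hxb' (h hxb)⟩
      have hcard' : b'.support.card ≤ n :=
        Nat.lt_succ_iff.mp (lt_of_lt_of_le (Finset.card_lt_card hss) hcard)
      obtain ⟨L', hL'⟩ := ih b' hb' hcard'
      exact cons_good b b' c k ℓ hcpos.le hkl hk hl hsub heq L' hL'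
    · -- tight case for b'
      obtain ⟨j₀, hj₀, hinf⟩ := Finset.exists_mem_eq_inf' hne3 (fun j => tau b j / 2)
      obtain ⟨hj₀s, hj₀kl⟩ := Finset.mem_sdiff.mp hj₀
      have hj₀k : j₀ ≠ k := by intro h; exact hj₀kl (by simp [h])
      have hj₀l : j₀ ≠ ℓ := by intro h; exact hj₀kl (by simp [h])
      have hbj₀ : b' j₀ = b j₀ := hb'other j₀ hj₀k hj₀l
      have hj₀s' : j₀ ∈ b'.support := by
        rw [Finsupp.mem_support_iff, hbj₀]
        exact Finsupp.mem_support_iff.mp hj₀s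
      have htight' : tau b' j₀ = 0 := by
        rw [htau', hbj₀]
        have hτ : tau b j₀ = S - 2 * b j₀ := by rw [tau, ← hSdef]
        have : c = tau b j₀ / 2 := by rw [hceq, htdef, hinf]
        rw [hτ] at this
        linarith
      obtain ⟨L', hL'⟩ := tight_case b' hb' j₀ hj₀s' htight'
      exact cons_good b b' c k ℓ hcpos.le hkl hk hl hsub heq L' hL'

/-- Every `b ∈ T` is a finite nonnegative rational combination of pure vectors
`e_{k_m, ℓ_m}` with `k_m < ℓ_m` and `k_m, ℓ_m` in the support of `b`. -/
theorem T_subset_pure_cone (b : ℤ →₀ ℚ) (hb : memT b) :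
    ∃ (N : ℕ) (c : Fin N → ℚ) (k ℓ : Fin N → ℤ),
      (∀ m, 0 ≤ c m) ∧ (∀ m, k m < ℓ m) ∧
      (∀ m, k m ∈ b.support ∧ ℓ m ∈ b.support) ∧
      b = ∑ m, c m • pureVec (k m) (ℓ m) := by
  obtain ⟨L, hmem, hsum⟩ := main_aux b.support.card b hb le_rfl
  refine ⟨L.length, fun m => (L.get m).1, fun m => (L.get m).2.1, fun m => (L.get m).2.2,
    ?_, ?_, ?_, ?_⟩
  · intro m; exact (hmem _ (L.get_mem m)).1
  · intro m; exact (hmem _ (L.get_mem m)).2.1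
  · intro m; exact ⟨(hmem _ (L.get_mem m)).2.2.1, (hmem _ (L.get_mem m)).2.2.2⟩
  · rw [hsum]
    rw [← Fin.sum_univ_fun_getElem L (fun p => p.1 • pureVec p.2.1 p.2.2)]
    rfl
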